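/- The binary operation ⋄ on F₃, defined by f ⋄ g = φ_{l(f)}(g) · f, where l(f) is the central leaf address of f, makes F₃ into a monoid with identity element the identity homeomorphism. -/

import Mathlib

open Set
open scoped Classical

noncomputable section

/-- An address: a finite word in the alphabet `{0,1,2}`. -/
abbrev Address : Type := List (Fin 3)

/-- Left endpoint of the triadic interval `I_α`. -/
def addrLeft : Address → ℝ
  | [] => 0
  | i :: α => ((i : ℕ) : ℝ) / 3 + addrLeft α / 3

/-- Length of the triadic interval `I_α`. -/
def addrLen (α : Address) : ℝ := (1 / 3 : ℝ) ^ α.length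

/-- The triadic subinterval `I_α ⊆ [0,1]` determined by the address `α`. -/
def Iaddr (α : Address) : Set ℝ := Set.Icc (addrLeft α) (addrLeft α + addrLen α)

/-- The linear orientation-preserving isomorphism `ψ_α : I_α → [0,1]`. -/
def psi (α : Address) (t : ℝ) : ℝ := (t - addrLeft α) / addrLen α

/-- The inverse `ψ_α⁻¹ : [0,1] → I_α`. -/
def psiInv (α : Address) (t : ℝ) : ℝ := addrLeft α + addrLen α * t

/-- `φ_α(f)` acts as `ψ_α⁻¹ ∘ f ∘ ψ_α` on `I_α` and as the identity elsewhere. -/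
def phi (α : Address) (f : ℝ → ℝ) : ℝ → ℝ :=
  fun t => if t ∈ Iaddr α then psiInv α (f (psi α t)) else t

/-- A triadic rational. -/
def IsTriadic (q : ℝ) : Prop := ∃ a : ℤ, ∃ n : ℕ, q = (a : ℝ) / 3 ^ n

/-- Membership in the Brown–Thompson group `F₃`, realized as piecewise-linear
homeomorphisms of `[0,1]` (extended by the identity to all of `ℝ`) with breakpoints
at triadic rationals and slopes powers of `3`. The group product is `f·g = g ∘ f`. -/
def IsF3 (f : ℝ → ℝ) : Prop :=
  (∀ t, t ∉ Set.Icc (0 : ℝ) 1 → f t = t) ∧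
  Set.BijOn f (Set.Icc 0 1) (Set.Icc 0 1) ∧
  StrictMonoOn f (Set.Icc 0 1) ∧
  ∃ breaks : Finset ℝ, (∀ b ∈ breaks, IsTriadic b) ∧
    ∀ x ∈ Set.Icc (0 : ℝ) 1, x ∉ breaks →
      ∃ (k : ℤ) (c : ℝ), IsTriadic c ∧
        ∀ᶠ y in nhdsWithin x (Set.Icc 0 1), f y = (3 : ℝ) ^ k * y + c

/-- `f` maps `I_α` linearly (preserving orientation, with triadic affine data)
onto the triadic interval `I_β`. -/
def IsTriadicLinearOn (f : ℝ → ℝ) (α β : Address) : Prop :=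
  ∀ t ∈ Iaddr α, f t = psiInv β (psi α t)

/-- The depth of the maximal all-`i` leaf of the reduced domain tree of `f`:
the least `n` such that `f` maps `I_{iⁿ}` linearly onto a triadic interval. -/
def leafExp (i : Fin 3) (f : ℝ → ℝ) : ℕ :=
  sInf {n : ℕ | ∃ β : Address, IsTriadicLinearOn f (List.replicate n i) β}

/-- The address `l(f) = 1ⁿ` of the central leaf of `f` (the leaf of the reduced
domain tree whose interval contains `1/2`). -/
def centralLeaf (f : ℝ → ℝ) : Address := List.replicate (leafExp 1 f) 1

/-- The central monoid operation `f ⋄ g = φ_{l(f)}(g) · f` (recall `a·b = b ∘ a`). -/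
def diam (f g : ℝ → ℝ) : ℝ → ℝ := fun t => f (phi (centralLeaf f) g t)


/-! ### Basic lemmas on addresses -/

@[simp] lemma addrLeft_nil : addrLeft [] = 0 := rfl
@[simp] lemma addrLeft_cons (i : Fin 3) (α : Address) :
    addrLeft (i :: α) = ((i : ℕ) : ℝ) / 3 + addrLeft α / 3 := rfl

lemma addrLen_pos (α : Address) : 0 < addrLen α := by
  unfold addrLen; positivity

lemma addrLen_ne (α : Address) : addrLen α ≠ 0 := (addrLen_pos α).ne'

lemma addrLeft_nonneg (α : Address) : 0 ≤ addrLeft α := by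
  induction α with
  | nil => simp
  | cons i α ih => simp only [addrLeft_cons]; positivity

lemma addrLeft_add_len_le_one (α : Address) : addrLeft α + addrLen α ≤ 1 := by
  induction α with
  | nil => simp [addrLen]
  | cons i α ih =>
    have hi : ((i : ℕ) : ℝ) ≤ 2 := by
      have := i.is_lt; exact_mod_cast Nat.lt_succ_iff.mp this
    simp only [addrLeft_cons]
    have hl : addrLen (i :: α) = addrLen α / 3 := by
      unfold addrLen; rw [List.length_cons, pow_succ]; ring
    rw [hl]
    unfold addrLen at *
    nlinarith

lemma Iaddr_subset (α : Address) : Iaddr α ⊆ Set.Icc (0:ℝ) 1 := by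
  intro t ht
  obtain ⟨h1, h2⟩ := ht
  exact ⟨le_trans (addrLeft_nonneg α) h1, le_trans h2 (addrLeft_add_len_le_one α)⟩

lemma psi_psiInv (α : Address) (t : ℝ) : psi α (psiInv α t) = t := by
  unfold psi psiInv; field_simp [addrLen_ne]; ring

lemma psiInv_psi (α : Address) (t : ℝ) : psiInv α (psi α t) = t := by
  unfold psi psiInv; field_simp [addrLen_ne]; ring

lemma psi_mem {α : Address} {t : ℝ} (h : t ∈ Iaddr α) : psi α t ∈ Set.Icc (0:ℝ) 1 := by
  obtain ⟨h1, h2⟩ := h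
  constructor
  · unfold psi; apply div_nonneg (by linarith) (addrLen_pos α).le
  · unfold psi; rw [div_le_one (addrLen_pos α)]; linarith

lemma psiInv_mem {α : Address} {t : ℝ} (h : t ∈ Set.Icc (0:ℝ) 1) : psiInv α t ∈ Iaddr α := by
  obtain ⟨h1, h2⟩ := h
  constructor
  · unfold psiInv; nlinarith [addrLen_pos α]
  · unfold psiInv; nlinarith [addrLen_pos α]

lemma addrLeft_append (α β : Address) :
    addrLeft (α ++ β) = addrLeft α + addrLen α * addrLeft β := by
  induction α with
  | nil => simp [addrLen]
  | cons i α ih =>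
    simp only [List.cons_append, addrLeft_cons, ih]
    have hl : addrLen (i :: α) = addrLen α / 3 := by
      unfold addrLen; rw [List.length_cons, pow_succ]; ring
    rw [hl]; ring

lemma addrLen_append (α β : Address) : addrLen (α ++ β) = addrLen α * addrLen β := by
  unfold addrLen; rw [List.length_append, pow_add]

lemma psiInv_comp (α β : Address) (s : ℝ) : psiInv α (psiInv β s) = psiInv (α ++ β) s := by
  unfold psiInv; rw [addrLeft_append, addrLen_append]; ring

lemma psi_psiInv_append (α β : Address) (s : ℝ) :
    psi α (psiInv (α ++ β) s) = psiInv β s := by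
  unfold psi psiInv
  rw [addrLeft_append, addrLen_append]
  field_simp [addrLen_ne]
  ring

lemma psi_append_psiInv (α γ : Address) (s : ℝ) :
    psi (α ++ γ) (psiInv α s) = psi γ s := by
  unfold psi psiInv
  rw [addrLeft_append, addrLen_append]
  field_simp [addrLen_ne]
  ring

lemma psi_psi (α β : Address) (t : ℝ) : psi β (psi α t) = psi (α ++ β) t := by
  unfold psi
  rw [addrLeft_append, addrLen_append]
  field_simp [addrLen_ne]
  ring

lemma mem_Iaddr_append {α β : Address} {t : ℝ} :
    t ∈ Iaddr (α ++ β) ↔ psi α t ∈ Iaddr β := by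
  unfold Iaddr psi
  rw [addrLeft_append, addrLen_append]
  simp only [Set.mem_Icc]
  rw [le_div_iff₀ (addrLen_pos α), div_le_iff₀ (addrLen_pos α)]
  constructor <;> intro ⟨h1, h2⟩ <;> constructor <;> nlinarith [addrLen_pos α]

lemma Iaddr_append_subset (α β : Address) : Iaddr (α ++ β) ⊆ Iaddr α := by
  intro t ht
  have h := mem_Iaddr_append.mp ht
  have h2 : psi α t ∈ Set.Icc (0:ℝ) 1 := Iaddr_subset β h
  have h3 := psiInv_mem (α := α) h2
  rwa [psiInv_psi] at h3

/-! ### Triadic rationals -/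

lemma isTriadic_div (a : ℤ) (n : ℕ) : IsTriadic ((a : ℝ) / 3 ^ n) := ⟨a, n, rfl⟩

lemma isTriadic_zero : IsTriadic 0 := ⟨0, 0, by norm_num⟩

lemma IsTriadic.add {p q : ℝ} (hp : IsTriadic p) (hq : IsTriadic q) : IsTriadic (p + q) := by
  obtain ⟨a, n, rfl⟩ := hp; obtain ⟨b, m, rfl⟩ := hq
  refine ⟨a * 3 ^ m + b * 3 ^ n, n + m, ?_⟩
  push_cast
  rw [pow_add]
  field_simp

lemma IsTriadic.neg {p : ℝ} (hp : IsTriadic p) : IsTriadic (-p) := by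
  obtain ⟨a, n, rfl⟩ := hp; exact ⟨-a, n, by push_cast; ring⟩

lemma IsTriadic.sub {p q : ℝ} (hp : IsTriadic p) (hq : IsTriadic q) : IsTriadic (p - q) := by
  rw [sub_eq_add_neg]; exact hp.add hq.neg

lemma IsTriadic.mul {p q : ℝ} (hp : IsTriadic p) (hq : IsTriadic q) : IsTriadic (p * q) := by
  obtain ⟨a, n, rfl⟩ := hp; obtain ⟨b, m, rfl⟩ := hq
  refine ⟨a * b, n + m, ?_⟩
  push_cast
  rw [pow_add, div_mul_div_comm]

lemma IsTriadic.zpow_mul (k : ℤ) {q : ℝ} (hq : IsTriadic q) : IsTriadic ((3:ℝ) ^ k * q) := by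
  obtain ⟨a, n, rfl⟩ := hq
  rcases le_or_gt 0 k with hk | hk
  · lift k to ℕ using hk
    refine ⟨a * 3 ^ k, n, ?_⟩
    push_cast
    rw [zpow_natCast]
    field_simp
  · refine ⟨a, n + (-k).toNat, ?_⟩
    have h3 : ((3:ℝ) ^ k) = 1 / 3 ^ (-k).toNat := by
      rw [eq_div_iff (by positivity), ← zpow_natCast (3:ℝ), ← zpow_add₀ (by norm_num : (3:ℝ) ≠ 0)]
      rw [Int.toNat_of_nonneg (by omega)]
      simp
    rw [h3, pow_add]
    field_simp

lemma addrLen_eq (α : Address) : addrLen α = 1 / 3 ^ α.length := by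
  unfold addrLen; rw [div_pow, one_pow]

lemma addrLen_isTriadic (α : Address) : IsTriadic (addrLen α) := by
  rw [addrLen_eq]; exact ⟨1, α.length, by push_cast; ring⟩

lemma addrLeft_num (α : Address) : ∃ a : ℤ, addrLeft α = (a : ℝ) / 3 ^ α.length := by
  induction α with
  | nil => exact ⟨0, by simp⟩
  | cons i α ih =>
    obtain ⟨a, ha⟩ := ih
    refine ⟨(i : ℕ) * 3 ^ α.length + a, ?_⟩
    simp only [addrLeft_cons, ha, List.length_cons]
    push_cast
    rw [pow_succ]
    field_simp

lemma addrLeft_isTriadic (α : Address) : IsTriadic (addrLeft α) := by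
  obtain ⟨a, ha⟩ := addrLeft_num α; exact ⟨a, α.length, ha⟩

/-- Every `a/3^m` with `0 ≤ a < 3^m` is the left endpoint of an address of length `m`. -/
lemma exists_address (m : ℕ) : ∀ a : ℕ, a < 3 ^ m →
    ∃ β : Address, β.length = m ∧ addrLeft β = (a : ℝ) / 3 ^ m := by
  induction m with
  | zero =>
    intro a ha
    interval_cases a
    exact ⟨[], rfl, by simp⟩
  | succ m ih =>
    intro a ha
    have h3 : a / 3 ^ m < 3 := by
      apply Nat.div_lt_of_lt_mul; rw [pow_succ] at ha; omega
    obtain ⟨β, hlen, hval⟩ := ih (a % 3 ^ m) (Nat.mod_lt _ (by positivity))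
    refine ⟨⟨a / 3 ^ m, h3⟩ :: β, by simp [hlen], ?_⟩
    simp only [addrLeft_cons, hval]
    have key : a = 3 ^ m * (a / 3 ^ m) + a % 3 ^ m := (Nat.div_add_mod a (3^m)).symm
    rw [pow_succ]
    field_simp
    push_cast [Fin.val_mk]
    nth_rewrite 3 [key]
    push_cast
    ring

lemma exists_address' {m : ℕ} {L : ℝ} (a : ℤ) (hL : L = (a : ℝ) / 3 ^ m)
    (h0 : 0 ≤ L) (h1 : L + (1/3:ℝ) ^ m ≤ 1) :
    ∃ β : Address, β.length = m ∧ addrLeft β = L := by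
  have ha0 : 0 ≤ a := by
    by_contra h
    push_neg at h
    have : (a : ℝ) < 0 := by exact_mod_cast h
    have : L < 0 := by rw [hL]; apply div_neg_of_neg_of_pos this (by positivity)
    linarith
  have ha1 : a < 3 ^ m := by
    by_contra h
    push_neg at h
    have : ((3:ℝ) ^ m : ℝ) ≤ (a : ℝ) := by exact_mod_cast h
    have hL1 : (1:ℝ) ≤ L := by
      rw [hL, le_div_iff₀ (by positivity : (0:ℝ) < 3 ^ m)]; linarith
    have : (0:ℝ) < (1/3:ℝ) ^ m := by positivity
    linarith
  lift a to ℕ using ha0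
  obtain ⟨β, h⟩ := exists_address m a (by exact_mod_cast ha1)
  exact ⟨β, h.1, by rw [hL]; rw [h.2]; norm_num⟩

/-! ### F3 basics -/

lemma IsF3.mapsTo {f : ℝ → ℝ} (hf : IsF3 f) : Set.MapsTo f (Set.Icc 0 1) (Set.Icc 0 1) :=
  hf.2.1.mapsTo

lemma IsF3.map_zero {f : ℝ → ℝ} (hf : IsF3 f) : f 0 = 0 := by
  have h0 : (0:ℝ) ∈ Set.Icc (0:ℝ) 1 := by norm_num
  obtain ⟨x, hx, hfx⟩ := hf.2.1.surjOn h0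
  rcases eq_or_lt_of_le hx.1 with h | h
  · rw [← h] at hfx; exact hfx
  · exfalso
    have := hf.2.2.1 h0 hx h
    rw [hfx] at this
    have := (hf.mapsTo h0).1
    linarith

lemma IsF3.map_one {f : ℝ → ℝ} (hf : IsF3 f) : f 1 = 1 := by
  have h1 : (1:ℝ) ∈ Set.Icc (0:ℝ) 1 := by norm_num
  obtain ⟨x, hx, hfx⟩ := hf.2.1.surjOn h1
  rcases eq_or_lt_of_le hx.2 with h | h
  · rw [h] at hfx; exact hfx
  · exfalso
    have := hf.2.2.1 hx h1 h
    rw [hfx] at this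
    have := (hf.mapsTo h1).2
    linarith

/-! ### phi basics -/

lemma phi_of_mem {α : Address} (g : ℝ → ℝ) {t : ℝ} (h : t ∈ Iaddr α) :
    phi α g t = psiInv α (g (psi α t)) := if_pos h

lemma phi_of_not_mem {α : Address} (g : ℝ → ℝ) {t : ℝ} (h : t ∉ Iaddr α) :
    phi α g t = t := if_neg h

lemma phi_id (α : Address) : phi α (fun t => t) = fun t => t := by
  funext t
  unfold phi
  split
  · exact psiInv_psi α t
  · rfl

lemma phi_mem {α : Address} {g : ℝ → ℝ} (hg : Set.MapsTo g (Set.Icc 0 1) (Set.Icc 0 1))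
    {t : ℝ} (h : t ∈ Iaddr α) : phi α g t ∈ Iaddr α := by
  rw [phi_of_mem g h]
  exact psiInv_mem (hg (psi_mem h))

lemma phi_mapsTo {α : Address} {g : ℝ → ℝ}
    (hg : Set.MapsTo g (Set.Icc 0 1) (Set.Icc 0 1)) :
    Set.MapsTo (phi α g) (Set.Icc 0 1) (Set.Icc 0 1) := by
  intro t ht
  by_cases h : t ∈ Iaddr α
  · exact Iaddr_subset α (phi_mem hg h)
  · rwa [phi_of_not_mem g h]

lemma not_mem_Iaddr_cases {α : Address} {t : ℝ} (ht : t ∉ Iaddr α) :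
    t < addrLeft α ∨ addrLeft α + addrLen α < t := by
  by_contra h
  push_neg at h
  exact ht ⟨le_of_not_gt (fun hh => ht (absurd ⟨by linarith, h.2⟩ ht)), h.2⟩

lemma phi_strictMonoOn {α : Address} {g : ℝ → ℝ}
    (hmono : StrictMonoOn g (Set.Icc 0 1))
    (hg : Set.MapsTo g (Set.Icc 0 1) (Set.Icc 0 1)) :
    StrictMonoOn (phi α g) (Set.Icc 0 1) := by
  intro s hs t ht hst
  by_cases h1 : s ∈ Iaddr α <;> by_cases h2 : t ∈ Iaddr α
  · rw [phi_of_mem g h1, phi_of_mem g h2]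
    unfold psiInv
    have hpsi : psi α s < psi α t := by
      unfold psi
      rw [div_lt_div_iff₀ (addrLen_pos α) (addrLen_pos α)]
      nlinarith [addrLen_pos α]
    have hgm := hmono (psi_mem h1) (psi_mem h2) hpsi
    have := mul_lt_mul_of_pos_left hgm (addrLen_pos α)
    linarith
  · have hlt : addrLeft α + addrLen α < t := by
      rcases not_mem_Iaddr_cases h2 with h | h
      · exfalso; exact absurd ⟨by linarith [h1.1], by linarith [h1.1]⟩ h2
      · exact h
    rw [phi_of_not_mem g h2]
    have := (phi_mem hg h1).2
    linarith
  · have hlt : s < addrLeft α := by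
      rcases not_mem_Iaddr_cases h1 with h | h
      · exact h
      · exfalso; linarith [h2.2]
    rw [phi_of_not_mem g h1]
    have := (phi_mem hg h2).1
    linarith
  · rw [phi_of_not_mem g h1, phi_of_not_mem g h2]; exact hst

lemma phi_surjOn {α : Address} {g : ℝ → ℝ}
    (hsurj : Set.SurjOn g (Set.Icc 0 1) (Set.Icc 0 1)) :
    Set.SurjOn (phi α g) (Set.Icc 0 1) (Set.Icc 0 1) := by
  intro y hy
  by_cases h : y ∈ Iaddr α
  · obtain ⟨u, hu, hgu⟩ := hsurj (psi_mem h)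
    refine ⟨psiInv α u, Iaddr_subset α (psiInv_mem hu), ?_⟩
    rw [phi_of_mem g (psiInv_mem hu), psi_psiInv, hgu, psiInv_psi]
  · exact ⟨y, hy, phi_of_not_mem g h⟩

lemma phi_bijOn {α : Address} {g : ℝ → ℝ} (hg : IsF3 g) :
    Set.BijOn (phi α g) (Set.Icc 0 1) (Set.Icc 0 1) :=
  ⟨phi_mapsTo hg.mapsTo, (phi_strictMonoOn hg.2.2.1 hg.mapsTo).injOn,
    phi_surjOn hg.2.1.surjOn⟩

lemma continuous_psi (α : Address) : Continuous (psi α) := by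
  unfold psi
  exact (continuous_id.sub continuous_const).div_const _

lemma phi_isF3 (α : Address) {g : ℝ → ℝ} (hg : IsF3 g) : IsF3 (phi α g) := by
  obtain ⟨hout, hbij, hmono, breaks, hbt, hbl⟩ := hg
  refine ⟨?_, phi_bijOn ⟨hout, hbij, hmono, breaks, hbt, hbl⟩,
    phi_strictMonoOn hmono hbij.mapsTo, ?_⟩
  · intro t ht
    apply phi_of_not_mem
    exact fun h => ht (Iaddr_subset α h)
  · refine ⟨{addrLeft α, addrLeft α + addrLen α} ∪ breaks.image (psiInv α), ?_, ?_⟩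
    · intro b hb
      rcases Finset.mem_union.mp hb with hb | hb
      · rcases Finset.mem_insert.mp hb with rfl | hb
        · exact addrLeft_isTriadic α
        · rw [Finset.mem_singleton.mp hb]
          exact (addrLeft_isTriadic α).add (addrLen_isTriadic α)
      · obtain ⟨c, hc, rfl⟩ := Finset.mem_image.mp hb
        exact (addrLeft_isTriadic α).add ((addrLen_isTriadic α).mul (hbt c hc))
    · intro x hx hxb
      rw [Finset.mem_union, not_or, Finset.mem_insert, Finset.mem_singleton, not_or] at hxb
      obtain ⟨⟨hxl, hxr⟩, hxim⟩ := hxb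
      by_cases hmem : x ∈ Iaddr α
      · -- interior of I_α
        have hIoo : x ∈ Set.Ioo (addrLeft α) (addrLeft α + addrLen α) :=
          ⟨lt_of_le_of_ne hmem.1 (Ne.symm hxl), lt_of_le_of_ne hmem.2 hxr⟩
        have hpsix : psi α x ∈ Set.Icc (0:ℝ) 1 := psi_mem hmem
        have hpsib : psi α x ∉ breaks := by
          intro hc
          apply hxim
          apply Finset.mem_image.mpr ⟨psi α x, hc, psiInv_psi α x⟩
        obtain ⟨k, c, hct, hev⟩ := hbl (psi α x) hpsix hpsib
        refine ⟨k, addrLeft α - 3 ^ k * addrLeft α + addrLen α * c, ?_, ?_⟩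
        · exact ((addrLeft_isTriadic α).sub
            (IsTriadic.zpow_mul k (addrLeft_isTriadic α))).add
            ((addrLen_isTriadic α).mul hct)
        · have hooev : ∀ᶠ y in nhdsWithin x (Set.Icc 0 1),
              y ∈ Set.Ioo (addrLeft α) (addrLeft α + addrLen α) :=
            Filter.Eventually.filter_mono nhdsWithin_le_nhds
              (isOpen_Ioo.eventually_mem hIoo)
          have htend : Filter.Tendsto (psi α) (nhdsWithin x (Set.Icc 0 1))
              (nhdsWithin (psi α x) (Set.Icc 0 1)) := by
            rw [tendsto_nhdsWithin_iff]
            constructor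
            · exact (((continuous_psi α).tendsto x).mono_left nhdsWithin_le_nhds)
            · exact hooev.mono fun y hy => psi_mem (Set.Ioo_subset_Icc_self hy)
          have hev2 := htend.eventually hev
          filter_upwards [hooev, hev2] with y hy1 hy2
          have hyI : y ∈ Iaddr α := Set.Ioo_subset_Icc_self hy1
          rw [phi_of_mem g hyI, hy2]
          unfold psi psiInv
          field_simp [addrLen_ne]
          ring
      · refine ⟨0, 0, isTriadic_zero, ?_⟩
        have : ∀ᶠ y in nhdsWithin x (Set.Icc 0 1), y ∈ (Iaddr α)ᶜ :=
          Filter.Eventually.filter_mono nhdsWithin_le_nhds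
            ((isClosed_Icc.isOpen_compl).eventually_mem hmem)
        filter_upwards [this] with y hy
        rw [phi_of_not_mem g hy]
        simp

lemma comp_isF3 {f h : ℝ → ℝ} (hf : IsF3 f) (hh : IsF3 h) : IsF3 (fun t => f (h t)) := by
  obtain ⟨fout, fbij, fmono, bf, hbft, hbfl⟩ := hf
  obtain ⟨hout, hbij, hmonoh, bh, hbht, hbhl⟩ := hh
  have hmapsto := hbij.mapsTo
  refine ⟨?_, fbij.comp hbij, fmono.comp hmonoh hmapsto, ?_⟩
  · intro t ht
    show f (h t) = t
    rw [hout t ht, fout t ht]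
  · have hSfin : (Set.Icc (0:ℝ) 1 ∩ h ⁻¹' ↑bf).Finite := by
      exact Set.Finite.of_finite_image
        (bf.finite_toSet.subset (by rintro y ⟨x, ⟨-, hx2⟩, rfl⟩; exact hx2))
        ((hmonoh.injOn).mono Set.inter_subset_left)
    refine ⟨bh ∪ hSfin.toFinset, ?_, ?_⟩
    · intro b hb
      rcases Finset.mem_union.mp hb with hb | hb
      · exact hbht b hb
      · rw [Set.Finite.mem_toFinset] at hb
        obtain ⟨hb1, hb2⟩ := hb
        by_cases hbh : b ∈ bh
        · exact hbht b hbh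
        · obtain ⟨k, c, hct, hev⟩ := hbhl b hb1 hbh
          have hself : h b = 3 ^ k * b + c :=
            hev.self_of_nhdsWithin hb1
          have hhb : IsTriadic (h b) := hbft _ hb2
          have e1 : (3:ℝ) ^ (-k) * (3:ℝ) ^ k = 1 := by
            rw [← zpow_add₀ (by norm_num : (3:ℝ) ≠ 0)]; simp
          have : b = (3:ℝ) ^ (-k) * (h b - c) := by
            rw [hself]
            calc b = ((3:ℝ) ^ (-k) * (3:ℝ) ^ k) * b := by rw [e1, one_mul]
            _ = (3:ℝ) ^ (-k) * (3 ^ k * b + c - c) := by ring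
          rw [this]
          exact IsTriadic.zpow_mul (-k) (hhb.sub hct)
    · intro x hx hxb
      rw [Finset.mem_union, not_or, Set.Finite.mem_toFinset] at hxb
      obtain ⟨hxbh, hxS⟩ := hxb
      have hhx : h x ∈ Set.Icc (0:ℝ) 1 := hmapsto hx
      have hhxbf : h x ∉ bf := fun hc => hxS ⟨hx, hc⟩
      obtain ⟨k1, c1, hc1t, hev1⟩ := hbhl x hx hxbh
      obtain ⟨k2, c2, hc2t, hev2⟩ := hbfl (h x) hhx hhxbf
      have hself : h x = 3 ^ k1 * x + c1 := hev1.self_of_nhdsWithin hx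
      have htendnhds : Filter.Tendsto h (nhdsWithin x (Set.Icc 0 1)) (nhds (h x)) := by
        have hlin : Filter.Tendsto (fun y => (3:ℝ) ^ k1 * y + c1)
            (nhdsWithin x (Set.Icc 0 1)) (nhds ((3:ℝ) ^ k1 * x + c1)) :=
          (((continuous_const.mul continuous_id).add continuous_const).tendsto x).mono_left
            nhdsWithin_le_nhds
        rw [hself]
        exact hlin.congr' (hev1.mono fun y hy => hy.symm)
      have htend : Filter.Tendsto h (nhdsWithin x (Set.Icc 0 1))
          (nhdsWithin (h x) (Set.Icc 0 1)) := by
        rw [tendsto_nhdsWithin_iff]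
        exact ⟨htendnhds, eventually_mem_nhdsWithin.mono fun y hy => hmapsto hy⟩
      refine ⟨k1 + k2, 3 ^ k2 * c1 + c2, (IsTriadic.zpow_mul k2 hc1t).add hc2t, ?_⟩
      filter_upwards [hev1, htend.eventually hev2] with y hy1 hy2
      rw [hy2, hy1, zpow_add₀ (by norm_num : (3:ℝ) ≠ 0)]
      ring

/-! ### IsTriadicLinearOn machinery -/

local notation "rep" n => List.replicate n (1 : Fin 3)

lemma isTriadicLinearOn_id (α : Address) : IsTriadicLinearOn (fun t => t) α α :=
  fun t _ => (psiInv_psi α t).symm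

lemma psi_eq_psiInv_append (α γ : Address) (t : ℝ) :
    psi α t = psiInv γ (psi (α ++ γ) t) := by
  conv_lhs => rw [← psiInv_psi (α ++ γ) t]
  rw [psi_psiInv_append]

lemma IsTriadicLinearOn.append {f : ℝ → ℝ} {α β : Address}
    (h : IsTriadicLinearOn f α β) (γ : Address) :
    IsTriadicLinearOn f (α ++ γ) (β ++ γ) := by
  intro t ht
  rw [h t (Iaddr_append_subset α γ ht), psi_eq_psiInv_append α γ, psiInv_comp]

lemma addrLeft_replicate (n : ℕ) : addrLeft (rep n) = 1/2 - (1/3:ℝ)^n/2 := by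
  induction n with
  | zero => simp
  | succ n ih =>
    rw [List.replicate_succ, addrLeft_cons, ih]
    have h1 : (((1 : Fin 3) : ℕ) : ℝ) = 1 := by norm_num
    rw [h1, pow_succ]
    ring

lemma addrLen_replicate (n : ℕ) : addrLen (rep n) = (1/3:ℝ)^n := by
  unfold addrLen; rw [List.length_replicate]

lemma half_not_triadic : ¬ IsTriadic (1/2 : ℝ) := by
  rintro ⟨a, n, ha⟩
  have h2 : (2 * a : ℝ) = 3 ^ n := by
    have h3 : (0:ℝ) < 3 ^ n := by positivity
    field_simp at ha
    linarith
  have h2' : (2 * a : ℤ) = 3 ^ n := by exact_mod_cast h2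
  have hodd : Odd ((3:ℤ) ^ n) := Odd.pow ⟨1, by norm_num⟩
  rw [← h2'] at hodd
  rcases hodd with ⟨j, hj⟩
  omega

lemma pow13 (m : ℕ) : ((1:ℝ)/3) ^ m = (3:ℝ) ^ (-(m:ℤ)) := by
  rw [one_div, inv_pow, ← zpow_natCast, ← zpow_neg]

lemma exists_linear {f : ℝ → ℝ} (hf : IsF3 f) :
    ∃ (n : ℕ) (β : Address), IsTriadicLinearOn f (rep n) β := by
  obtain ⟨hout, hbij, hmono, breaks, hbt, hbl⟩ := hf
  have hhalf : (1/2 : ℝ) ∈ Set.Icc (0:ℝ) 1 := by norm_num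
  have hhb : (1/2 : ℝ) ∉ breaks := fun hc => half_not_triadic (hbt _ hc)
  obtain ⟨k, c, hct, hev⟩ := hbl (1/2) hhalf hhb
  rw [nhdsWithin_eq_nhds.mpr (Icc_mem_nhds (by norm_num) (by norm_num))] at hev
  rw [Metric.eventually_nhds_iff] at hev
  obtain ⟨ε, hε, hball⟩ := hev
  obtain ⟨n₀, hn₀⟩ := exists_pow_lt_of_lt_one hε (by norm_num : (1/3:ℝ) < 1)
  obtain ⟨cz, p, rfl⟩ := hct
  set n : ℕ := max n₀ (k + p).toNat with hn
  -- all points of I_{1^n} are within ε of 1/2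
  have hIn : ∀ t ∈ Iaddr (rep n), f t = 3 ^ k * t + (cz : ℝ) / 3 ^ p := by
    intro t ht
    apply hball
    obtain ⟨h1, h2⟩ := ht
    rw [addrLeft_replicate] at h1 h2
    rw [addrLen_replicate] at h2
    have hle : ((1:ℝ)/3) ^ n ≤ (1/3:ℝ) ^ n₀ :=
      pow_le_pow_of_le_one (by norm_num) (by norm_num) (le_max_left _ _)
    rw [Real.dist_eq, abs_lt]
    constructor <;> nlinarith
  set L : ℝ := addrLeft (rep n) with hL
  have hLI : L ∈ Iaddr (rep n) := by
    constructor
    · exact le_refl _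
    · have := addrLen_pos (rep n); linarith
  have hRI : L + addrLen (rep n) ∈ Iaddr (rep n) := by
    constructor
    · have := addrLen_pos (rep n); linarith
    · exact le_refl _
  have hL01 := Iaddr_subset _ hLI
  have hR01 := Iaddr_subset _ hRI
  have hfL := hbij.mapsTo hL01
  have hfR := hbij.mapsTo hR01
  have hfLe := hIn L hLI
  have hfRe := hIn _ hRI
  -- k ≤ n
  have hkn : k ≤ (n : ℤ) := by
    by_contra hcon
    push_neg at hcon
    have h31 : (3:ℝ) ≤ 3 ^ (k - (n:ℤ)) := by
      calc (3:ℝ) = 3 ^ (1:ℤ) := (zpow_one 3).symm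
      _ ≤ 3 ^ (k - (n:ℤ)) := by
        apply zpow_le_zpow_right₀ (by norm_num)
        omega
    have hlen : addrLen (rep n) = (3:ℝ) ^ (-(n:ℤ)) := by
      rw [addrLen_replicate, pow13]
    have hdiff : f (L + addrLen (rep n)) - f L = 3 ^ (k - (n:ℤ)) := by
      rw [hfRe, hfLe, hlen]
      rw [zpow_sub₀ (by norm_num : (3:ℝ) ≠ 0)]
      rw [zpow_neg]
      field_simp
      ring
    have := hfL.1
    have := hfR.2
    linarith [hdiff]
  set m : ℕ := (↑n - k).toNat with hm
  have hmz : (m : ℤ) = ↑n - k := Int.toNat_of_nonneg (by omega)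
  have hpm : p ≤ m := by
    have h1 : (k + p : ℤ) ≤ ((k+p).toNat : ℤ) := Int.self_le_toNat _
    have h2 : ((k+p).toNat : ℤ) ≤ (n : ℤ) := by exact_mod_cast le_max_right n₀ (k+p).toNat
    omega
  -- numerator
  obtain ⟨j, hj⟩ : ∃ j : ℤ, (3:ℤ)^n = 2*j + 1 := by
    exact Odd.pow ⟨1, by norm_num⟩
  have hLj : L = (j : ℝ) / 3 ^ n := by
    rw [hL, addrLeft_replicate]
    have h3 : ((3:ℝ)^n) = 2*(j:ℝ) + 1 := by exact_mod_cast hj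
    have e : ((1:ℝ)/3)^n * 3^n = 1 := by
      rw [div_pow, one_pow, div_mul_cancel₀]
      positivity
    rw [eq_div_iff (by positivity : ((3:ℝ)^n) ≠ 0)]
    nlinarith [h3, e]
  have hfL3 : f L = ((j + cz * 3 ^ (m - p) : ℤ) : ℝ) / 3 ^ m := by
    rw [hfLe, hLj]
    have e1 : (3:ℝ) ^ k * ((j:ℝ) / 3 ^ n) = (j : ℝ) / 3 ^ m := by
      rw [mul_div_assoc']
      rw [div_eq_div_iff (pow_ne_zero n (by norm_num)) (pow_ne_zero m (by norm_num))]
      have e : (3:ℝ) ^ k * (3:ℝ) ^ m = (3:ℝ) ^ n := by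
        rw [← zpow_natCast (3:ℝ) m, ← zpow_natCast (3:ℝ) n,
          ← zpow_add₀ (by norm_num : (3:ℝ) ≠ 0)]
        congr 1
        omega
      linear_combination (j : ℝ) * e
    have e2 : ((cz:ℝ)) / 3 ^ p = ((cz:ℝ) * 3 ^ (m - p)) / 3 ^ m := by
      rw [div_eq_div_iff (pow_ne_zero p (by norm_num)) (pow_ne_zero m (by norm_num))]
      rw [mul_assoc, ← pow_add]
      have : m - p + p = m := by omega
      rw [this]
    rw [e1, e2]
    push_cast
    ring
  have hfplus : f L + (1/3:ℝ) ^ m ≤ 1 := by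
    have : f (L + addrLen (rep n)) = f L + (1/3:ℝ)^m := by
      rw [hfRe, hfLe, addrLen_replicate, pow13 n, pow13 m]
      rw [mul_add, ← zpow_add₀ (by norm_num : (3:ℝ) ≠ 0)]
      have : k + -(n:ℤ) = -(m:ℤ) := by omega
      rw [this]
      ring
    rw [← this]
    exact hfR.2
  obtain ⟨β, hβlen, hβval⟩ := exists_address' (m := m) (j + cz * 3 ^ (m - p)) hfL3 hfL.1 hfplus
  refine ⟨n, β, ?_⟩
  have hβval' : addrLeft β = f L := by rw [hβval, hfL3]
  intro t ht
  rw [hIn t ht]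
  unfold psiInv psi
  have hlenβ : addrLen β = (3:ℝ) ^ (-(m:ℤ)) := by
    rw [addrLen_eq, hβlen, show (1:ℝ)/3^m = ((1:ℝ)/3)^m by rw [div_pow, one_pow], pow13]
  have hlenn : addrLen (rep n) = (3:ℝ) ^ (-(n:ℤ)) := by rw [addrLen_replicate, pow13]
  rw [hβval', hfLe, hlenβ, hlenn]
  have key : (3:ℝ) ^ (-(m:ℤ)) * ((t - L) / (3:ℝ) ^ (-(n:ℤ))) = (3:ℝ) ^ k * (t - L) := by
    have hinv : ((3:ℝ) ^ (-(n:ℤ)))⁻¹ = (3:ℝ) ^ (n:ℤ) := by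
      rw [← zpow_neg]; congr 1; omega
    rw [div_eq_mul_inv, hinv, mul_comm (t - L) _, ← mul_assoc,
      ← zpow_add₀ (by norm_num : (3:ℝ) ≠ 0)]
    congr 2
    omega
  rw [key]
  ring

/-! ### leafExp -/

lemma leafExp_le {f : ℝ → ℝ} {n : ℕ} {β : Address}
    (h : IsTriadicLinearOn f (rep n) β) : leafExp 1 f ≤ n :=
  Nat.sInf_le ⟨β, h⟩

lemma leafExp_spec {f : ℝ → ℝ} (hf : IsF3 f) :
    ∃ β : Address, IsTriadicLinearOn f (rep (leafExp 1 f)) β := by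
  obtain ⟨n, β, h⟩ := exists_linear hf
  have hne : {n : ℕ | ∃ β : Address, IsTriadicLinearOn f (List.replicate n 1) β}.Nonempty :=
    ⟨n, β, h⟩
  exact Nat.sInf_mem hne

lemma psiInv_injective {α : Address} {x y : ℝ} (h : psiInv α x = psiInv α y) : x = y := by
  have := congrArg (psi α) h
  rwa [psi_psiInv, psi_psiInv] at this

lemma psi_addrLeft (γ : Address) : psi γ (addrLeft γ) = 0 := by
  unfold psi; simp

lemma psi_addrRight (γ : Address) : psi γ (addrLeft γ + addrLen γ) = 1 := by
  unfold psi; rw [add_sub_cancel_left, div_self (addrLen_ne γ)]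

lemma addrLeft_mem_Iaddr (γ : Address) : addrLeft γ ∈ Iaddr γ :=
  ⟨le_refl _, by linarith [addrLen_pos γ]⟩

lemma addrRight_mem_Iaddr (γ : Address) : addrLeft γ + addrLen γ ∈ Iaddr γ :=
  ⟨by linarith [addrLen_pos γ], le_refl _⟩

/-- Recognition: if `ψ_{β_f}⁻¹ ∘ g = ψ_β⁻¹ ∘ ψ_γ` on `I_γ`, then `g` is
triadic-linear on `I_γ`. -/
lemma recognize {g : ℝ → ℝ} (hg : IsF3 g) (γ βf β : Address)
    (hkey : ∀ s ∈ Iaddr γ, psiInv βf (g s) = psiInv β (psi γ s)) :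
    ∃ β' : Address, β'.length = β.length - βf.length ∧ IsTriadicLinearOn g γ β' := by
  have hLI := addrLeft_mem_Iaddr γ
  have hRI := addrRight_mem_Iaddr γ
  have hgL01 := hg.mapsTo (Iaddr_subset γ hLI)
  have hgR01 := hg.mapsTo (Iaddr_subset γ hRI)
  have hgL : g (addrLeft γ) = psi βf (addrLeft β) := by
    apply psiInv_injective (α := βf)
    rw [hkey _ hLI, psi_addrLeft, psiInv_psi]
    unfold psiInv
    ring
  have hgR : g (addrLeft γ + addrLen γ) = psi βf (addrLeft β) + addrLen β / addrLen βf := by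
    apply psiInv_injective (α := βf)
    rw [hkey _ hRI, psi_addrRight]
    unfold psiInv psi
    field_simp [addrLen_ne βf]
    ring
  have hdiff : g (addrLeft γ + addrLen γ) - g (addrLeft γ) = addrLen β / addrLen βf := by
    rw [hgR, hgL]; ring
  have hlen : βf.length ≤ β.length := by
    have h1 : addrLen β / addrLen βf ≤ 1 := by
      rw [← hdiff]
      have := hgL01.1; have := hgR01.2
      linarith
    rw [div_le_one (addrLen_pos βf)] at h1
    rw [addrLen_eq, addrLen_eq, div_le_div_iff₀ (by positivity) (by positivity), one_mul,
      one_mul] at h1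
    exact (pow_le_pow_iff_right₀ (by norm_num : (1:ℝ) < 3)).mp h1
  set m' : ℕ := β.length - βf.length with hm'
  have hratio : addrLen β / addrLen βf = (1/3:ℝ) ^ m' := by
    unfold addrLen
    rw [hm', pow_sub₀ _ (by norm_num : (1/3:ℝ) ≠ 0) hlen, div_eq_mul_inv]
  obtain ⟨aβ, haβ⟩ := addrLeft_num β
  obtain ⟨af, haf⟩ := addrLeft_num βf
  have h3m : (3:ℝ) ^ (βf.length) * 3 ^ m' = 3 ^ (β.length) := by
    rw [← pow_add]; congr 1; omega
  have hnum : g (addrLeft γ) = ((aβ - af * 3 ^ m' : ℤ) : ℝ) / 3 ^ m' := by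
    rw [hgL]
    unfold psi
    rw [addrLen_eq βf,
      div_eq_div_iff (by positivity : (0:ℝ) < 1/3^(βf.length)).ne'
        (by positivity : (0:ℝ) < (3:ℝ)^m').ne', haβ, haf]
    push_cast
    have hBne : ((3:ℝ) ^ (β.length)) ≠ 0 := pow_ne_zero _ (by norm_num)
    have hFne : ((3:ℝ) ^ (βf.length)) ≠ 0 := pow_ne_zero _ (by norm_num)
    rw [div_sub_div _ _ hBne hFne, div_mul_eq_mul_div, mul_one_div,
      div_eq_div_iff (mul_ne_zero hBne hFne) hFne]
    linear_combination ((aβ:ℝ) * (3:ℝ) ^ (βf.length)) * h3m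
  have h0 : 0 ≤ g (addrLeft γ) := hgL01.1
  have h1 : g (addrLeft γ) + (1/3:ℝ) ^ m' ≤ 1 := by
    have := hgR01.2
    linarith [hdiff, hratio.symm.trans hdiff.symm]
  obtain ⟨β', hβ'len, hβ'val⟩ := exists_address' (aβ - af * 3 ^ m') hnum h0 h1
  refine ⟨β', hβ'len, ?_⟩
  intro s hs
  have hk := hkey s hs
  have hgs : g s = psi βf (psiInv β (psi γ s)) := by
    have h2 := congrArg (psi βf) hk
    rwa [psi_psiInv] at h2
  have hβ'L : addrLeft β' = (addrLeft β - addrLeft βf) / addrLen βf := by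
    rw [hβ'val, hgL]; rfl
  have hβ'ℓ : addrLen β' = addrLen β / addrLen βf := by
    rw [hratio]
    unfold addrLen
    rw [hβ'len]
  rw [hgs]
  show psi βf (psiInv β (psi γ s)) = psiInv β' (psi γ s)
  unfold psiInv psi
  rw [hβ'L, hβ'ℓ]
  field_simp [addrLen_ne βf]
  have hc : addrLen βf * (addrLen βf)⁻¹ = 1 := mul_inv_cancel₀ (addrLen_ne βf)
  ring

/-! ### nil address -/

lemma psi_nil (s : ℝ) : psi [] s = s := by
  unfold psi addrLen; simp

lemma psiInv_nil (s : ℝ) : psiInv [] s = s := by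
  unfold psiInv addrLen; simp

lemma Iaddr_nil : Iaddr ([] : Address) = Set.Icc (0:ℝ) 1 := by
  unfold Iaddr addrLen; norm_num

lemma rep_split {n a : ℕ} (h : n ≤ a) : (rep a) = (rep n) ++ (rep (a - n)) := by
  rw [← List.replicate_add]; congr 1; omega

/-! ### the phi composition identity -/

lemma phi_phi {α β : Address} {g k : ℝ → ℝ}
    (hk : Set.MapsTo k (Set.Icc 0 1) (Set.Icc 0 1)) (t : ℝ) :
    phi α (fun s => g (phi β k s)) t = phi α g (phi (α ++ β) k t) := by
  by_cases h1 : t ∈ Iaddr (α ++ β)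
  · have htα : t ∈ Iaddr α := Iaddr_append_subset α β h1
    have hψ : psi α t ∈ Iaddr β := mem_Iaddr_append.mp h1
    rw [phi_of_mem (fun s => g (phi β k s)) htα]
    rw [phi_of_mem k hψ, psi_psi, phi_of_mem k h1]
    have hv : k (psi (α ++ β) t) ∈ Set.Icc (0:ℝ) 1 := hk (psi_mem h1)
    have hu : psiInv (α ++ β) (k (psi (α ++ β) t)) ∈ Iaddr α :=
      Iaddr_append_subset _ _ (psiInv_mem hv)
    rw [phi_of_mem g hu, psi_psiInv_append]
  · rw [phi_of_not_mem k h1]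
    by_cases h2 : t ∈ Iaddr α
    · rw [phi_of_mem (fun s => g (phi β k s)) h2, phi_of_mem g h2]
      have hnb : psi α t ∉ Iaddr β := fun hc => h1 (mem_Iaddr_append.mpr hc)
      rw [phi_of_not_mem k hnb]
    · rw [phi_of_not_mem (fun s => g (phi β k s)) h2, phi_of_not_mem g h2]

/-! ### leafExp of diam -/

lemma diam_linear {f g : ℝ → ℝ} {βf βg : Address}
    (hβf : IsTriadicLinearOn f (rep (leafExp 1 f)) βf)
    (hβg : IsTriadicLinearOn g (rep (leafExp 1 g)) βg) :
    IsTriadicLinearOn (diam f g) (rep (leafExp 1 f + leafExp 1 g)) (βf ++ βg) := by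
  set a := leafExp 1 f with ha
  set b := leafExp 1 g with hb
  have hsplit : (rep (a + b)) = (rep a) ++ (rep b) := by rw [← List.replicate_add]
  intro t ht
  rw [hsplit] at ht ⊢
  have hta : t ∈ Iaddr (rep a) := Iaddr_append_subset _ _ ht
  have htb : psi (rep a) t ∈ Iaddr (rep b) := mem_Iaddr_append.mp ht
  show f (phi (centralLeaf f) g t) = psiInv (βf ++ βg) (psi ((rep a) ++ (rep b)) t)
  have h1 : phi (centralLeaf f) g t = psiInv ((rep a) ++ βg) (psi ((rep a) ++ (rep b)) t) := by
    show phi (rep a) g t = _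
    rw [phi_of_mem g hta, hβg _ htb, psi_psi, psiInv_comp]
  rw [h1]
  have h2 : psiInv ((rep a) ++ βg) (psi ((rep a) ++ (rep b)) t) ∈ Iaddr ((rep a) ++ βg) :=
    psiInv_mem (psi_mem ht)
  rw [hβf _ (Iaddr_append_subset _ _ h2), psi_psiInv_append, psiInv_comp]

lemma diam_key {f g : ℝ → ℝ} (hg : IsF3 g) {n : ℕ} {β βf : Address}
    (hβf : IsTriadicLinearOn f (rep (leafExp 1 f)) βf)
    (hβ : IsTriadicLinearOn (diam f g) (rep n) β)
    (han : leafExp 1 f ≤ n) :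
    ∀ s ∈ Iaddr (rep (n - leafExp 1 f)),
      psiInv βf (g s) = psiInv β (psi (rep (n - leafExp 1 f)) s) := by
  set a := leafExp 1 f with ha
  intro s hs
  have hs01 : s ∈ Set.Icc (0:ℝ) 1 := Iaddr_subset _ hs
  set t := psiInv (rep a) s with htdef
  have hsplit : (rep n) = (rep a) ++ (rep (n - a)) := rep_split han
  have htn : t ∈ Iaddr (rep n) := by
    rw [hsplit]
    apply mem_Iaddr_append.mpr
    rw [htdef, psi_psiInv]
    exact hs
  have hta : t ∈ Iaddr (rep a) := psiInv_mem hs01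
  have hgs01 : g s ∈ Set.Icc (0:ℝ) 1 := hg.mapsTo hs01
  have hphit : phi (centralLeaf f) g t = psiInv (rep a) (g s) := by
    show phi (rep a) g t = _
    rw [phi_of_mem g hta, htdef, psi_psiInv]
  have hlhs : diam f g t = psiInv βf (g s) := by
    show f (phi (centralLeaf f) g t) = _
    rw [hphit, hβf _ (psiInv_mem hgs01), psi_psiInv]
  have hr : psi (rep n) t = psi (rep (n - a)) s := by
    rw [htdef, hsplit, psi_append_psiInv]
  rw [← hlhs, hβ t htn, hr]

lemma leafExp_diam {f g : ℝ → ℝ} (hf : IsF3 f) (hg : IsF3 g) :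
    leafExp 1 (diam f g) = leafExp 1 f + leafExp 1 g := by
  obtain ⟨βf, hβf⟩ := leafExp_spec hf
  obtain ⟨βg, hβg⟩ := leafExp_spec hg
  have hub := diam_linear hβf hβg
  apply le_antisymm (leafExp_le hub)
  have hne : {m : ℕ | ∃ δ : Address,
      IsTriadicLinearOn (diam f g) (List.replicate m 1) δ}.Nonempty := ⟨_, βf ++ βg, hub⟩
  apply le_csInf hne
  rintro n ⟨β, hβ⟩
  by_cases han : leafExp 1 f ≤ n
  · -- a ≤ n : get linearity of g on I_{1^{n-a}}
    have hkey := diam_key hg hβf hβ han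
    obtain ⟨β', -, hβ'lin⟩ := recognize hg (rep (n - leafExp 1 f)) βf β hkey
    have hb := leafExp_le hβ'lin
    omega
  · -- n < a : then g must be the identity
    exfalso
    push_neg at han
    set a := leafExp 1 f with ha
    have hsplit : (rep a) = (rep n) ++ (rep (a - n)) := rep_split han.le
    have hkey : ∀ s ∈ Iaddr ([] : Address),
        psiInv βf (g s) = psiInv (β ++ (rep (a - n))) (psi [] s) := by
      intro s hs
      rw [Iaddr_nil] at hs
      set t := psiInv (rep a) s with htdef
      have hta : t ∈ Iaddr (rep a) := psiInv_mem hs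
      have htn : t ∈ Iaddr (rep n) := by
        rw [hsplit] at hta
        exact Iaddr_append_subset _ _ hta
      have hgs01 : g s ∈ Set.Icc (0:ℝ) 1 := hg.mapsTo hs
      have hphit : phi (centralLeaf f) g t = psiInv (rep a) (g s) := by
        show phi (rep a) g t = _
        rw [phi_of_mem g hta, htdef, psi_psiInv]
      have hlhs : diam f g t = psiInv βf (g s) := by
        show f (phi (centralLeaf f) g t) = _
        rw [hphit, hβf _ (psiInv_mem hgs01), psi_psiInv]
      have hr : psi (rep n) t = psiInv (rep (a - n)) s := by
        rw [htdef, hsplit, psi_psiInv_append]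
      rw [psi_nil, ← hlhs, hβ t htn, hr, psiInv_comp]
    obtain ⟨β', -, hβ'lin⟩ := recognize hg [] βf (β ++ (rep (a - n))) hkey
    -- g is affine on [0,1] and fixes 0,1 hence is the identity
    have h0m : (0:ℝ) ∈ Iaddr ([] : Address) := by rw [Iaddr_nil]; norm_num
    have h1m : (1:ℝ) ∈ Iaddr ([] : Address) := by rw [Iaddr_nil]; norm_num
    have e0 := hβ'lin 0 h0m
    have e1 := hβ'lin 1 h1m
    rw [hg.map_zero, psi_nil] at e0
    rw [hg.map_one, psi_nil] at e1
    unfold psiInv at e0 e1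
    have hgid : g = fun t => t := by
      funext t
      by_cases hmem : t ∈ Set.Icc (0:ℝ) 1
      · have := hβ'lin t (by rwa [Iaddr_nil])
        rw [psi_nil] at this
        unfold psiInv at this
        rw [this]
        linear_combination (t - 1) * e0 - t * e1
      · exact hg.1 t hmem
    have hdf : diam f g = f := by
      funext t
      show f (phi (centralLeaf f) g t) = f t
      rw [hgid, phi_id]
    rw [hdf] at hβ
    have := leafExp_le hβ
    omega

/-! ### the main theorem -/

lemma leafExp_id : leafExp 1 (fun t => t : ℝ → ℝ) = 0 :=
  Nat.sInf_eq_zero.mpr (Or.inl ⟨[], isTriadicLinearOn_id []⟩)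

/-- `⋄` makes `F₃` a monoid with identity the identity homeomorphism:
`F₃` is closed under `⋄`, the identity map is a two-sided unit, and `⋄` is associative. -/
theorem diam_monoid :
    (∀ f g : ℝ → ℝ, IsF3 f → IsF3 g → IsF3 (diam f g)) ∧
    (∀ f : ℝ → ℝ, IsF3 f → diam f (fun t => t) = f ∧ diam (fun t => t) f = f) ∧
    (∀ f g h : ℝ → ℝ, IsF3 f → IsF3 g → IsF3 h →
      diam (diam f g) h = diam f (diam g h)) := by
  refine ⟨?_, ?_, ?_⟩
  · intro f g hf hg
    show IsF3 (fun t => f (phi (centralLeaf f) g t))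
    exact comp_isF3 (f := f) (h := phi (centralLeaf f) g) hf (phi_isF3 (centralLeaf f) hg)
  · intro f hf
    constructor
    · funext t
      show f (phi (centralLeaf f) (fun t => t) t) = f t
      rw [phi_id]
    · funext t
      show (fun t => t) (phi (centralLeaf (fun t => t : ℝ → ℝ)) f t) = f t
      have hc : centralLeaf (fun t => t : ℝ → ℝ) = [] := by
        unfold centralLeaf
        rw [leafExp_id]
        rfl
      rw [hc]
      show phi [] f t = f t
      by_cases hmem : t ∈ Iaddr ([] : Address)
      · rw [phi_of_mem f hmem, psi_nil, psiInv_nil]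
      · rw [phi_of_not_mem f hmem]
        exact (hf.1 t (by rwa [Iaddr_nil] at hmem)).symm
  · intro f g h hf hg hh
    have hcl : centralLeaf (diam f g) = centralLeaf f ++ centralLeaf g := by
      unfold centralLeaf
      rw [leafExp_diam hf hg, List.replicate_add]
    funext t
    show (diam f g) (phi (centralLeaf (diam f g)) h t) = f (phi (centralLeaf f) (diam g h) t)
    rw [hcl]
    show f (phi (centralLeaf f) g (phi (centralLeaf f ++ centralLeaf g) h t)) = _
    congr 1
    exact (phi_phi (α := centralLeaf f) (β := centralLeaf g) hh.mapsTo t).symm
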